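/- The algebra H of coordinate functions with product μ, full coproduct Δ, counit ε, and antipode S is a connected graded commutative non-cocommutative Hopf algebra, graded by deg(a_η) = 2|η|_{x0} + |η|_{x1} + 1 extended multiplicatively with deg(1) = 0. -/

import Mathlib

open scoped TensorProduct

noncomputable section

namespace Paper

/-- Words over the alphabet `X = {x0, x1}`, encoded as lists over `Fin 2`
(`0` stands for the letter `x0` and `1` for the letter `x1`). -/
abbrev Word : Type := List (Fin 2)

/-- Formal power series `ℝ⟨⟨X⟩⟩`, given by their coefficient functions `η ↦ ⟨c,η⟩`. -/
abbrev Series : Type := Word → ℝ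

/-- The left shift `x_i⁻¹(c)`. -/
def lshift (i : Fin 2) (c : Series) : Series := fun w => c (i :: w)

/-- Left concatenation `x_i c` of the letter `x_i` onto every word of `c`. -/
def lconcat (i : Fin 2) (c : Series) : Series := fun w =>
  match w with
  | [] => 0
  | j :: v => if j = i then c v else 0

/-- Right concatenation `p x_i` of the letter `x_i` onto every word of `p`. -/
def rconcat {R : Type*} [Zero R] (i : Fin 2) (p : Word → R) : Word → R := fun w =>
  if w.getLast? = some i then p w.dropLast else 0

/-- The series of a single word. -/
def ind (η : Word) : Series := fun w => if w = η then 1 else 0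

/-- The empty word as a series, the unit `∅` (often written `1`). -/
def one : Series := ind []

/-- The shuffle product, defined coefficientwise by the recursion
`⟨c ⧢ d, ∅⟩ = ⟨c,∅⟩⟨d,∅⟩` and `⟨c ⧢ d, x_i w⟩ = ⟨x_i⁻¹(c) ⧢ d, w⟩ + ⟨c ⧢ x_i⁻¹(d), w⟩`,
which is the bilinear (and ultrametrically continuous) extension of the recursive
shuffle product of words. -/
def shuffleFn : Series → Series → Word → ℝ
  | c, d, [] => c [] * d []
  | c, d, i :: w => shuffleFn (lshift i c) d w + shuffleFn c (lshift i d) w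

/-- The shuffle product on `ℝ⟨⟨X⟩⟩`. -/
def sh (c d : Series) : Series := shuffleFn c d

/-- The map `φ_d(x_i)` for the modified composition product:
`φ_d(x0)(e) = x0 e` and `φ_d(x1)(e) = x1 e + x0 (d ⧢ e)`. -/
def phiLetter (d : Series) (i : Fin 2) (e : Series) : Series :=
  if i = 0 then lconcat 0 e else lconcat 1 e + lconcat 0 (sh d e)

/-- `φ_d(η)`, the algebra-homomorphism extension determined by
`φ_d(x_i η) = φ_d(x_i) ∘ φ_d(η)` and `φ_d(∅) = id`. -/
def phi (d : Series) : Word → Series → Series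
  | [], e => e
  | i :: η, e => phiLetter d i (phi d η e)

/-- The modified composition product `c ∘̃ d = Σ_η ⟨c,η⟩ φ_d(η)(1)`. -/
def mcomp (c d : Series) : Series := fun w => ∑' η : Word, c η * phi d η one w

/-- The map `ψ_d(x_i)` for the composition product:
`ψ_d(x0)(e) = x0 e` and `ψ_d(x1)(e) = x0 (d ⧢ e)`. -/
def psiLetter (d : Series) (i : Fin 2) (e : Series) : Series :=
  if i = 0 then lconcat 0 e else lconcat 0 (sh d e)

/-- `ψ_d(η)`, determined by `ψ_d(x_i η) = ψ_d(x_i) ∘ ψ_d(η)` and `ψ_d(∅) = id`. -/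
def psi (d : Series) : Word → Series → Series
  | [], e => e
  | i :: η, e => psiLetter d i (psi d η e)

/-- The composition product `c ∘ d = Σ_η ⟨c,η⟩ ψ_d(η)(1)`. -/
def comp (c d : Series) : Series := fun w => ∑' η : Word, c η * psi d η one w

/-- The group operation on `ℝ⟨⟨X_δ⟩⟩ = {δ + c}`, transported to the `c`-parts:
`c_δ ∘ d_δ = δ + (d + c ∘̃ d)`. -/
def gop (c d : Series) : Series := d + mcomp c d

/-- The Ferfera series `c = Σ_{k ≥ 0} k! x1^k`. -/
def ferfera : Series := fun w =>
  if w = List.replicate w.length (1 : Fin 2) then (Nat.factorial w.length : ℝ) else 0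

/-- The degree of a word, `deg(η) = 2|η|_{x0} + |η|_{x1} + 1`. -/
def degW (η : Word) : ℕ := 2 * η.count 0 + η.count 1 + 1

/-- The output feedback Hopf algebra `H`: the free unital commutative `ℝ`-algebra on the
coordinate functions `a_η`, realized as polynomials in commuting variables indexed by words. -/
abbrev H : Type := MvPolynomial Word ℝ

/-- The coordinate function `a_η`. -/
def aw (η : Word) : H := MvPolynomial.X η

/-- Character (pointwise) evaluation of elements of `H` at a series `c`:
`(a_{η₁} ⋯ a_{η_l})(c) = ⟨c,η₁⟩ ⋯ ⟨c,η_l⟩`, extended as an algebra map. -/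
def evalS (c : Series) : H →ₐ[ℝ] ℝ := MvPolynomial.aeval c

/-- Evaluation of `H ⊗ H` at a pair of series: `(p ⊗ q)(c,d) = p(c) q(d)`. -/
def evalPair (c d : Series) : H ⊗[ℝ] H →ₗ[ℝ] ℝ :=
  (LinearMap.mul' ℝ ℝ).comp (TensorProduct.map (evalS c).toLinearMap (evalS d).toLinearMap)

/-- The counit `ε` of `H`: `ε(a_η) = 0`, `ε(1) = 1`. -/
def counit : H →ₐ[ℝ] ℝ := evalS 0

/-- The defining property of the full coproduct `Δ` of the output feedback Hopf algebra:
`Δ a_η = Δ̃ a_η + 1 ⊗ a_η` where `Δ̃ a_η (c,d) = ⟨c ∘̃ d, η⟩`, i.e.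
`(Δ a_η)(c,d) = ⟨c ∘̃ d, η⟩ + ⟨d, η⟩` for all series `c, d`; `Δ` is an algebra morphism. -/
def IsFBCoproduct (Δ : H →ₐ[ℝ] (H ⊗[ℝ] H)) : Prop :=
  ∀ (η : Word) (c d : Series), evalPair c d (Δ (aw η)) = mcomp c d η + d η

/-- `S` is an antipode for the coproduct `Δ` (with counit `ε`):
`μ ∘ (S ⊗ id) ∘ Δ = 1·ε = μ ∘ (id ⊗ S) ∘ Δ`. -/
def IsAntipode (Δ : H →ₐ[ℝ] (H ⊗[ℝ] H)) (S : H →ₗ[ℝ] H) : Prop :=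
  (∀ p : H, LinearMap.mul' ℝ H (TensorProduct.map S LinearMap.id (Δ p)) = counit p • 1) ∧
  (∀ p : H, LinearMap.mul' ℝ H (TensorProduct.map LinearMap.id S (Δ p)) = counit p • 1)

/-- The right-augmentation operator `θ̃_i`, the derivation on `H` with `θ̃_i(a_η) = a_{η x_i}`. -/
def thetaR (i : Fin 2) : Derivation ℝ H H :=
  MvPolynomial.mkDerivation ℝ fun η => aw (η ++ [i])

/-- The left-augmentation operator `θ_i`, the derivation on `H` with `θ_i(a_η) = a_{x_i η}`. -/
def thetaL (i : Fin 2) : Derivation ℝ H H :=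
  MvPolynomial.mkDerivation ℝ fun η => aw (i :: η)

/-- The multiplication operator `κ_∅(h) = h · a_∅`. -/
def kappaE : H →ₗ[ℝ] H := LinearMap.mulRight ℝ (aw [])

/-- The shuffle coefficient `⟨ξ ⧢ ν, η⟩`. -/
def shCoeff (ξ ν η : Word) : ℝ := sh (ind ξ) (ind ν) η

/-- The finite set of words of length `n`. -/
def wordsLen (n : ℕ) : Finset Word :=
  (Finset.univ : Finset (Fin n → Fin 2)).image List.ofFn

/-- The deshuffle coproduct `Δ_⧢ a_η = Σ_{ξ,ν} ⟨ξ ⧢ ν, η⟩ a_ξ ⊗ a_ν`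
(the unique coproduct satisfying `Δ_⧢ a_∅ = a_∅ ⊗ a_∅` and the coderivation recursions
with respect to the augmentation operators). -/
def deshuffle (η : Word) : H ⊗[ℝ] H :=
  ∑ k ∈ Finset.range (η.length + 1), ∑ ξ ∈ wordsLen k, ∑ ν ∈ wordsLen (η.length - k),
    shCoeff ξ ν η • (aw ξ ⊗ₜ[ℝ] aw ν)

/-- Iterated integrals: `E_∅[u](t) = 1`, `E_{x_i η}[u](t) = ∫₀ᵗ u_i(s) E_η[u](s) ds`. -/
def E (u : Fin 2 → ℝ → ℝ) : Word → ℝ → ℝ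
  | [], _ => 1
  | i :: η, t => ∫ s in (0:ℝ)..t, u i s * E u η s

end Paper

namespace OFHAux

open Paper

/-! ### Generic series calculus over a commutative ring -/

section Generic

variable {R : Type*} [CommRing R]

def lshiftR (i : Fin 2) (c : Word → R) : Word → R := fun w => c (i :: w)

def lconcatR (i : Fin 2) (c : Word → R) : Word → R := fun w =>
  match w with
  | [] => 0
  | j :: v => if j = i then c v else 0

def shR : (Word → R) → (Word → R) → Word → R
  | c, d, [] => c [] * d []
  | c, d, i :: w => shR (lshiftR i c) d w + shR c (lshiftR i d) w

def indR (η : Word) : Word → R := fun w => if w = η then 1 else 0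

def oneR : Word → R := indR []

def phiLetterR (d : Word → R) (i : Fin 2) (e : Word → R) : Word → R :=
  if i = 0 then lconcatR 0 e else lconcatR 1 e + lconcatR 0 (shR d e)

def phiR (d : Word → R) : Word → (Word → R) → Word → R
  | [], e => e
  | i :: η, e => phiLetterR d i (phiR d η e)

lemma phiLetterR_zero (d e : Word → R) : phiLetterR d 0 e = lconcatR 0 e := if_pos rfl

lemma phiLetterR_one (d e : Word → R) :
    phiLetterR d 1 e = lconcatR 1 e + lconcatR 0 (shR d e) := if_neg (by decide)

@[simp] lemma shR_nil (c d : Word → R) : shR c d [] = c [] * d [] := rfl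

@[simp] lemma shR_cons (c d : Word → R) (i : Fin 2) (w : Word) :
    shR c d (i :: w) = shR (lshiftR i c) d w + shR c (lshiftR i d) w := rfl

@[simp] lemma lshiftR_apply (i : Fin 2) (c : Word → R) (w : Word) :
    lshiftR i c w = c (i :: w) := rfl

lemma lshiftR_add (i : Fin 2) (c c' : Word → R) :
    lshiftR i (c + c') = lshiftR i c + lshiftR i c' := rfl

@[simp] lemma phiR_nil (d : Word → R) (e : Word → R) : phiR d [] e = e := rfl

@[simp] lemma phiR_cons (d : Word → R) (i : Fin 2) (ξ : Word) (e : Word → R) :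
    phiR d (i :: ξ) e = phiLetterR d i (phiR d ξ e) := rfl

@[simp] lemma lconcatR_nil (i : Fin 2) (c : Word → R) : lconcatR i c [] = 0 := rfl

@[simp] lemma lconcatR_cons (i j : Fin 2) (c : Word → R) (v : Word) :
    lconcatR i c (j :: v) = if j = i then c v else 0 := rfl

lemma shR_add_left : ∀ (w : Word) (c c' d : Word → R),
    shR (c + c') d w = shR c d w + shR c' d w := by
  intro w
  induction w with
  | nil => intro c c' d; simp [Pi.add_apply]; ring
  | cons i w ih =>
    intro c c' d
    simp only [shR_cons, lshiftR_add, ih]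
    ring

lemma shR_add_right : ∀ (w : Word) (c d d' : Word → R),
    shR c (d + d') w = shR c d w + shR c d' w := by
  intro w
  induction w with
  | nil => intro c d d'; simp [Pi.add_apply]; ring
  | cons i w ih =>
    intro c d d'
    simp only [shR_cons, lshiftR_add, ih]
    ring

lemma shR_zero_left : ∀ (w : Word) (d : Word → R), shR 0 d w = 0 := by
  intro w
  induction w with
  | nil => intro d; simp [Pi.zero_apply]
  | cons i w ih =>
    intro d
    have h : lshiftR i (0 : Word → R) = 0 := rfl
    simp [shR_cons, h, ih]

lemma shR_zero_right : ∀ (w : Word) (c : Word → R), shR c 0 w = 0 := by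
  intro w
  induction w with
  | nil => intro c; simp [Pi.zero_apply]
  | cons i w ih =>
    intro c
    have h : lshiftR i (0 : Word → R) = 0 := rfl
    simp [shR_cons, h, ih]

lemma shR_mul_right : ∀ (w : Word) (r : R) (c d : Word → R),
    shR c (fun v => r * d v) w = r * shR c d w := by
  intro w
  induction w with
  | nil => intro r c d; simp; ring
  | cons i w ih =>
    intro r c d
    have h1 : lshiftR i (fun v => r * d v) = fun v => r * (lshiftR i d) v := rfl
    simp only [shR_cons, h1, ih]
    ring

lemma shR_comm : ∀ (w : Word) (c d : Word → R), shR c d w = shR d c w := by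
  intro w
  induction w with
  | nil => intro c d; simp; ring
  | cons i w ih =>
    intro c d
    simp only [shR_cons]
    rw [ih, ih (c := c), add_comm]

lemma shR_assoc : ∀ (w : Word) (a b c : Word → R),
    shR (shR a b) c w = shR a (shR b c) w := by
  intro w
  induction w with
  | nil => intro a b c; simp; ring
  | cons i w ih =>
    intro a b c
    have hl : lshiftR i (shR a b) =
        (fun v => shR (lshiftR i a) b v) + fun v => shR a (lshiftR i b) v := by
      funext v; simp [lshiftR]
    have hr : lshiftR i (shR b c) =
        (fun v => shR (lshiftR i b) c v) + fun v => shR b (lshiftR i c) v := by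
      funext v; simp [lshiftR]
    simp only [shR_cons, hl, hr, shR_add_left, shR_add_right, ih]
    ring

lemma shR_left_comm : ∀ (w : Word) (a b c : Word → R),
    shR a (shR b c) w = shR b (shR a c) w := by
  intro w a b c
  rw [← shR_assoc, ← shR_assoc]
  have h : shR a b = shR b a := funext fun v => shR_comm v a b
  rw [h]

lemma shR_congr : ∀ (w : Word) (c X Y : Word → R),
    (∀ v : Word, v.length ≤ w.length → X v = Y v) → shR c X w = shR c Y w := by
  intro w
  induction w with
  | nil => intro c X Y h; simp [h [] le_rfl]
  | cons i w ih =>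
    intro c X Y h
    simp only [shR_cons]
    rw [ih (lshiftR i c) X Y fun v hv => h v (by simpa using Nat.le_succ_of_le hv),
      ih c (lshiftR i X) (lshiftR i Y) fun v hv => h (i :: v) (by simpa using Nat.succ_le_succ hv)]

lemma shR_sum_right {ι : Type*} (s : Finset ι) (c : Word → R) (f : ι → Word → R) (w : Word) :
    shR c (fun v => ∑ x ∈ s, f x v) w = ∑ x ∈ s, shR c (f x) w := by
  classical
  induction s using Finset.induction_on with
  | empty => simp; exact shR_zero_right w c
  | insert a s hx ih =>
    have h : (fun v => ∑ x ∈ insert a s, f x v) = f a + fun v => ∑ x ∈ s, f x v := by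
      funext v; simp [Finset.sum_insert hx]
    rw [h, shR_add_right, ih, Finset.sum_insert hx]

/-! ### Weight functions and vanishing lemmas -/

lemma fin2 (i : Fin 2) : i = 0 ∨ i = 1 := by revert i; decide

def wgt (f : Fin 2 → ℕ) (w : Word) : ℕ := (w.map f).sum

@[simp] lemma wgt_nil (f : Fin 2 → ℕ) : wgt f [] = 0 := rfl

@[simp] lemma wgt_cons (f : Fin 2 → ℕ) (j : Fin 2) (v : Word) :
    wgt f (j :: v) = f j + wgt f v := by simp [wgt]

lemma shR_vanish (f : Fin 2 → ℕ) : ∀ (v : Word) (c e : Word → R) (K : ℕ),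
    (∀ u : Word, wgt f u < K → e u = 0) → wgt f v < K → shR c e v = 0 := by
  intro v
  induction v with
  | nil => intro c e K he hv; simp [he [] (by simpa using hv)]
  | cons j v ih =>
    intro c e K he hv
    rw [wgt_cons] at hv
    simp only [shR_cons]
    rw [ih (lshiftR j c) e K he (by omega),
      ih c (lshiftR j e) (K - f j)
        (fun u hu => he (j :: u) (by rw [wgt_cons]; omega)) (by omega)]
    ring

lemma phiLetterR_vanish (f : Fin 2 → ℕ) (hf : f 1 ≤ f 0) (d : Word → R) (i : Fin 2)
    (e : Word → R) (K : ℕ) (he : ∀ u : Word, wgt f u < K → e u = 0) :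
    ∀ w : Word, wgt f w < K + f i → phiLetterR d i e w = 0 := by
  intro w hw
  rcases fin2 i with rfl | rfl
  · rw [phiLetterR_zero]
    cases w with
    | nil => rfl
    | cons j v =>
      rw [wgt_cons] at hw
      rw [lconcatR_cons]
      by_cases hj : j = (0 : Fin 2)
      · subst hj; rw [if_pos rfl]; exact he v (by omega)
      · rw [if_neg hj]
  · rw [phiLetterR_one]
    cases w with
    | nil => show lconcatR 1 e [] + lconcatR 0 (shR d e) [] = 0; simp
    | cons j v =>
      rw [wgt_cons] at hw
      show lconcatR 1 e (j :: v) + lconcatR 0 (shR d e) (j :: v) = 0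
      rw [lconcatR_cons, lconcatR_cons]
      by_cases hj1 : j = (1 : Fin 2)
      · subst hj1
        rw [if_pos rfl, if_neg (by decide), he v (by omega)]
        ring
      · rw [if_neg hj1]
        by_cases hj0 : j = (0 : Fin 2)
        · subst hj0
          rw [if_pos rfl, shR_vanish f v d e K he (by omega)]
          ring
        · rw [if_neg hj0]; ring

lemma phiR_vanish (f : Fin 2 → ℕ) (hf : f 1 ≤ f 0) (d : Word → R) :
    ∀ (ξ : Word) (e : Word → R) (K : ℕ),
      (∀ u : Word, wgt f u < K → e u = 0) →
      ∀ w : Word, wgt f w < K + wgt f ξ → phiR d ξ e w = 0 := by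
  intro ξ
  induction ξ with
  | nil => intro e K he w hw; exact he w (by simpa using hw)
  | cons i ξ ih =>
    intro e K he w hw
    rw [phiR_cons]
    exact phiLetterR_vanish f hf d i (phiR d ξ e) (K + wgt f ξ)
      (fun u hu => ih e K he u hu) w (by rw [wgt_cons] at hw; omega)

lemma wgt_one (w : Word) : wgt (fun _ => 1) w = w.length := by
  induction w with
  | nil => rfl
  | cons j v ih => simp [wgt_cons, ih]; omega

lemma phiR_vanish_len (d : Word → R) (ξ w : Word) (h : w.length < ξ.length) :
    phiR d ξ oneR w = 0 := by
  have := phiR_vanish (fun _ => 1) le_rfl d ξ oneR 0 (fun u hu => by omega) w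
  rw [wgt_one, wgt_one] at this
  exact this (by omega)

def wL : Fin 2 → ℕ := fun i => if i = 0 then 2 else 1

lemma wL_le : wL 1 ≤ wL 0 := by decide

lemma phiR_vanish_wL (d : Word → R) (ξ w : Word) (h : wgt wL w < wgt wL ξ) :
    phiR d ξ oneR w = 0 :=
  phiR_vanish wL wL_le d ξ oneR 0 (fun u hu => by omega) w (by omega)

/-! ### Border behaviour: triangularity with unit diagonal -/

def lcat : Word → (Word → R) → Word → R
  | [], d0 => d0
  | i :: ξ, d0 => lconcatR i (lcat ξ d0)

lemma phiLetterR_border (d : Word → R) (i : Fin 2) (E D0 : Word → R) (M : ℕ)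
    (hv : ∀ u : Word, wgt wL u < M → E u = 0)
    (hb : ∀ u : Word, wgt wL u = M → E u = D0 u) :
    ∀ w : Word, wgt wL w = M + wL i → phiLetterR d i E w = lconcatR i D0 w := by
  intro w hw
  rcases fin2 i with rfl | rfl
  · rw [phiLetterR_zero]
    cases w with
    | nil => simp [wL] at hw
    | cons j v =>
      rw [wgt_cons] at hw
      rw [lconcatR_cons, lconcatR_cons]
      by_cases hj : j = (0 : Fin 2)
      · subst hj
        rw [if_pos rfl, if_pos rfl, hb v (by simp [wL] at hw ⊢; omega)]
      · rw [if_neg hj, if_neg hj]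
  · rw [phiLetterR_one]
    cases w with
    | nil => simp [wL] at hw
    | cons j v =>
      rw [wgt_cons] at hw
      show lconcatR 1 E (j :: v) + lconcatR 0 (shR d E) (j :: v) = lconcatR 1 D0 (j :: v)
      rw [lconcatR_cons, lconcatR_cons, lconcatR_cons]
      by_cases hj1 : j = (1 : Fin 2)
      · subst hj1
        rw [if_pos rfl, if_pos rfl, if_neg (by decide),
          hb v (by simp [wL] at hw ⊢; omega)]
        ring
      · rw [if_neg hj1, if_neg hj1]
        by_cases hj0 : j = (0 : Fin 2)
        · subst hj0
          rw [if_pos rfl, shR_vanish wL v d E M hv (by simp [wL] at hw ⊢; omega)]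
          ring
        · rw [if_neg hj0]; ring

lemma phiR_border (d : Word → R) : ∀ (ξ : Word) (e d0 : Word → R) (K : ℕ),
    (∀ u : Word, wgt wL u < K → e u = 0) →
    (∀ u : Word, wgt wL u = K → e u = d0 u) →
    ∀ w : Word, wgt wL w = K + wgt wL ξ → phiR d ξ e w = lcat ξ d0 w := by
  intro ξ
  induction ξ with
  | nil => intro e d0 K hv hb w hw; exact hb w (by simpa using hw)
  | cons i ξ ih =>
    intro e d0 K hv hb w hw
    rw [phiR_cons]
    exact phiLetterR_border d i (phiR d ξ e) (lcat ξ d0) (K + wgt wL ξ)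
      (fun u hu => phiR_vanish wL wL_le d ξ e K hv u hu)
      (fun u hu => ih e d0 K hv hb u hu) w (by rw [wgt_cons] at hw; omega)

lemma lconcatR_indR (i : Fin 2) (ξ : Word) :
    lconcatR i (indR ξ : Word → R) = indR (i :: ξ) := by
  funext w
  cases w with
  | nil => simp [indR]
  | cons j v =>
    by_cases hj : j = i <;> by_cases hv : v = ξ <;>
      simp [indR, hj, hv, List.cons_eq_cons]

lemma lcat_oneR : ∀ ξ : Word, (lcat ξ oneR : Word → R) = indR ξ := by
  intro ξ
  induction ξ with
  | nil => rfl
  | cons i ξ ih => rw [lcat, ih, lconcatR_indR]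

lemma phiR_diag (d : Word → R) (ξ w : Word) (h : wgt wL w = wgt wL ξ) :
    phiR d ξ oneR w = indR ξ w := by
  rw [← lcat_oneR]
  exact phiR_border d ξ oneR oneR 0 (fun u hu => by omega) (fun u hu => rfl) w (by omega)

end Generic

end OFHAux

namespace OFHAux

open Paper

section Generic

variable {R : Type*} [CommRing R]

@[simp] lemma oneR_nil : (oneR : Word → R) [] = 1 := by simp [oneR, indR]

@[simp] lemma oneR_cons (j : Fin 2) (v : Word) : (oneR : Word → R) (j :: v) = 0 := by
  simp [oneR, indR]

lemma mem_wordsLen (n : ℕ) (ξ : Word) : ξ ∈ wordsLen n ↔ ξ.length = n := by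
  constructor
  · intro h; rcases Finset.mem_image.mp h with ⟨f, _, rfl⟩; simp
  · intro h; subst h; exact Finset.mem_image.mpr ⟨ξ.get, Finset.mem_univ _, List.ofFn_get ξ⟩

def allW (n : ℕ) : Finset Word := (Finset.range (n+1)).biUnion wordsLen

lemma mem_allW (n : ℕ) (ξ : Word) : ξ ∈ allW n ↔ ξ.length ≤ n := by
  simp only [allW, Finset.mem_biUnion, Finset.mem_range, mem_wordsLen]
  constructor
  · rintro ⟨k, hk, h⟩; omega
  · intro h; exact ⟨ξ.length, by omega, rfl⟩

lemma allW_succ (n : ℕ) : allW (n+1) =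
    insert [] (((allW n).image (List.cons 0)) ∪ ((allW n).image (List.cons 1))) := by
  ext ξ
  cases ξ with
  | nil => simp [mem_allW]
  | cons j v =>
    simp only [mem_allW, Finset.mem_insert, Finset.mem_union, Finset.mem_image,
      List.length_cons]
    constructor
    · intro h
      rcases fin2 j with rfl | rfl
      · exact Or.inr (Or.inl ⟨v, by omega, rfl⟩)
      · exact Or.inr (Or.inr ⟨v, by omega, rfl⟩)
    · rintro (h | ⟨a, ha, h⟩ | ⟨a, ha, h⟩)
      · exact absurd h (by simp)
      · injection h with h1 h2
        subst h2
        omega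
      · injection h with h1 h2
        subst h2
        omega

lemma sum_allW_succ (n : ℕ) (g : Word → R) :
    ∑ ξ ∈ allW (n+1), g ξ =
      g [] + (∑ ξ ∈ allW n, g (0 :: ξ)) + ∑ ξ ∈ allW n, g (1 :: ξ) := by
  classical
  have h1 : ([] : Word) ∉ ((allW n).image (List.cons 0)) ∪ ((allW n).image (List.cons 1)) := by
    simp
  have h2 : Disjoint ((allW n).image (List.cons (0 : Fin 2))) ((allW n).image (List.cons 1)) := by
    simp only [Finset.disjoint_left, Finset.mem_image]
    rintro ξ ⟨a, _, rfl⟩ ⟨b, _, hb⟩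
    injection hb with hb1 _
    exact absurd hb1 (by decide)
  rw [allW_succ, Finset.sum_insert h1, Finset.sum_union h2,
    Finset.sum_image (fun a _ b _ h => by injection h),
    Finset.sum_image (fun a _ b _ h => by injection h)]
  ring

def mcompR (c d : Word → R) : Word → R := fun w =>
  ∑ ξ ∈ allW w.length, c ξ * phiR d ξ oneR w

lemma mcompR_mono (c d : Word → R) (w : Word) (m : ℕ) (hm : w.length ≤ m) :
    mcompR c d w = ∑ ξ ∈ allW m, c ξ * phiR d ξ oneR w := by
  apply Finset.sum_subset
  · intro ξ hξ
    rw [mem_allW] at hξ ⊢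
    omega
  · intro ξ hξ hnot
    rw [mem_allW] at hnot
    rw [phiR_vanish_len d ξ w (by omega)]
    ring

lemma allW_zero : allW 0 = {([] : Word)} := by
  ext ξ
  simp [mem_allW, List.length_eq_zero_iff]

lemma mcompR_nil (c d : Word → R) : mcompR c d [] = c [] := by
  simp [mcompR, allW_zero]

lemma phiR_cons_apply0 (d : Word → R) (ξ w : Word) (j : Fin 2) :
    phiR d (0 :: ξ) oneR (j :: w) = if j = 0 then phiR d ξ oneR w else 0 := by
  rw [phiR_cons, phiLetterR_zero, lconcatR_cons]

lemma phiR_cons_apply1 (d : Word → R) (ξ w : Word) (j : Fin 2) :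
    phiR d (1 :: ξ) oneR (j :: w) =
      (if j = 1 then phiR d ξ oneR w else 0) +
        (if j = 0 then shR d (phiR d ξ oneR) w else 0) := by
  rw [phiR_cons, phiLetterR_one, Pi.add_apply, lconcatR_cons, lconcatR_cons]

lemma mcompR_cons1 (c d : Word → R) (w : Word) :
    mcompR c d (1 :: w) = mcompR (lshiftR 1 c) d w := by
  show ∑ ξ ∈ allW (w.length + 1), c ξ * phiR d ξ oneR (1 :: w) = _
  rw [sum_allW_succ]
  have h0 : c [] * phiR d [] oneR (1 :: w) = 0 := by rw [phiR_nil, oneR_cons, mul_zero]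
  have hA : ∑ ξ ∈ allW w.length, c (0 :: ξ) * phiR d (0 :: ξ) oneR (1 :: w) = 0 := by
    apply Finset.sum_eq_zero
    intro ξ _
    rw [phiR_cons_apply0, if_neg (by decide), mul_zero]
  have hB : ∑ ξ ∈ allW w.length, c (1 :: ξ) * phiR d (1 :: ξ) oneR (1 :: w)
      = ∑ ξ ∈ allW w.length, lshiftR 1 c ξ * phiR d ξ oneR w := by
    apply Finset.sum_congr rfl
    intro ξ _
    rw [phiR_cons_apply1, if_pos rfl, if_neg (by decide), add_zero]
    rfl
  rw [h0, hA, hB, zero_add, zero_add]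
  rfl

lemma mcompR_cons0 (c d : Word → R) (w : Word) :
    mcompR c d (0 :: w) =
      mcompR (lshiftR 0 c) d w + shR d (mcompR (lshiftR 1 c) d) w := by
  show ∑ ξ ∈ allW (w.length + 1), c ξ * phiR d ξ oneR (0 :: w) = _
  rw [sum_allW_succ]
  have h0 : c [] * phiR d [] oneR (0 :: w) = 0 := by rw [phiR_nil, oneR_cons, mul_zero]
  have hA : ∑ ξ ∈ allW w.length, c (0 :: ξ) * phiR d (0 :: ξ) oneR (0 :: w)
      = ∑ ξ ∈ allW w.length, lshiftR 0 c ξ * phiR d ξ oneR w := by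
    apply Finset.sum_congr rfl
    intro ξ _
    rw [phiR_cons_apply0, if_pos rfl]
    rfl
  have hB : ∑ ξ ∈ allW w.length, c (1 :: ξ) * phiR d (1 :: ξ) oneR (0 :: w)
      = shR d (mcompR (lshiftR 1 c) d) w := by
    have hterm : ∀ ξ ∈ allW w.length, c (1 :: ξ) * phiR d (1 :: ξ) oneR (0 :: w)
        = shR d (fun v => c (1 :: ξ) * phiR d ξ oneR v) w := by
      intro ξ _
      rw [phiR_cons_apply1, if_neg (by decide), if_pos rfl, zero_add, shR_mul_right]
    rw [Finset.sum_congr rfl hterm, ← shR_sum_right]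
    apply shR_congr
    intro v hv
    exact (mcompR_mono (lshiftR 1 c) d v w.length hv).symm
  rw [h0, hA, hB, zero_add]
  rfl

lemma mcompR_add_left (c c' d : Word → R) :
    mcompR (c + c') d = mcompR c d + mcompR c' d := by
  funext w
  simp [mcompR, Pi.add_apply, add_mul, Finset.sum_add_distrib]

lemma mcompR_l1 (c d : Word → R) :
    lshiftR 1 (mcompR c d) = mcompR (lshiftR 1 c) d :=
  funext fun w => mcompR_cons1 c d w

lemma mcompR_l0 (c d : Word → R) :
    lshiftR 0 (mcompR c d) =
      mcompR (lshiftR 0 c) d + shR d (mcompR (lshiftR 1 c) d) :=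
  funext fun w => mcompR_cons0 c d w

lemma lshiftR_shR (i : Fin 2) (c d : Word → R) :
    lshiftR i (shR c d) = shR (lshiftR i c) d + shR c (lshiftR i d) := rfl

lemma mcompR_shR_aux : ∀ (n : ℕ) (w : Word), w.length ≤ n → ∀ (c c' d : Word → R),
    mcompR (shR c c') d w = shR (mcompR c d) (mcompR c' d) w := by
  intro n
  induction n with
  | zero =>
    intro w hw c c' d
    have hnil : w = [] := List.length_eq_zero_iff.mp (Nat.le_zero.mp hw)
    subst hnil
    rw [mcompR_nil, shR_nil, shR_nil, mcompR_nil, mcompR_nil]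
  | succ n ih =>
    intro w hw c c' d
    cases w with
    | nil => rw [mcompR_nil, shR_nil, shR_nil, mcompR_nil, mcompR_nil]
    | cons i w =>
      have hw' : w.length ≤ n := by simpa using hw
      rcases fin2 i with rfl | rfl
      · rw [mcompR_cons0, shR_cons, mcompR_l0, mcompR_l0, lshiftR_shR, lshiftR_shR,
          mcompR_add_left, mcompR_add_left]
        simp only [Pi.add_apply, shR_add_left, shR_add_right]
        rw [ih w hw' (lshiftR 0 c) c' d, ih w hw' c (lshiftR 0 c') d]
        have hc1 : shR d (mcompR (shR (lshiftR 1 c) c') d) w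
            = shR d (fun v => shR (mcompR (lshiftR 1 c) d) (mcompR c' d) v) w :=
          shR_congr w d _ _ fun v hv => ih v (le_trans hv hw') (lshiftR 1 c) c' d
        have hc2 : shR d (mcompR (shR c (lshiftR 1 c')) d) w
            = shR d (fun v => shR (mcompR c d) (mcompR (lshiftR 1 c') d) v) w :=
          shR_congr w d _ _ fun v hv => ih v (le_trans hv hw') c (lshiftR 1 c') d
        rw [hc1, hc2]
        have e1 : shR (shR d (mcompR (lshiftR 1 c) d)) (mcompR c' d) w
            = shR d (fun v => shR (mcompR (lshiftR 1 c) d) (mcompR c' d) v) w := by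
          rw [shR_assoc]
        have e2 : shR (mcompR c d) (shR d (mcompR (lshiftR 1 c') d)) w
            = shR d (fun v => shR (mcompR c d) (mcompR (lshiftR 1 c') d) v) w := by
          rw [shR_left_comm]
        rw [e1, e2]
        ring
      · rw [mcompR_cons1, shR_cons, mcompR_l1, mcompR_l1, lshiftR_shR, mcompR_add_left]
        simp only [Pi.add_apply]
        rw [ih w hw' (lshiftR 1 c) c' d, ih w hw' c (lshiftR 1 c') d]

lemma mcompR_shR (c c' d : Word → R) (w : Word) :
    mcompR (shR c c') d w = shR (mcompR c d) (mcompR c' d) w :=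
  mcompR_shR_aux w.length w le_rfl c c' d

def gopR (c d : Word → R) : Word → R := d + mcompR c d

lemma mcompR_assoc_aux : ∀ (n : ℕ) (w : Word), w.length ≤ n → ∀ (c d e : Word → R),
    mcompR (mcompR c d) e w = mcompR c (gopR d e) w := by
  intro n
  induction n with
  | zero =>
    intro w hw c d e
    have hnil : w = [] := List.length_eq_zero_iff.mp (Nat.le_zero.mp hw)
    subst hnil
    rw [mcompR_nil, mcompR_nil, mcompR_nil]
  | succ n ih =>
    intro w hw c d e
    cases w with
    | nil => rw [mcompR_nil, mcompR_nil, mcompR_nil]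
    | cons i w =>
      have hw' : w.length ≤ n := by simpa using hw
      rcases fin2 i with rfl | rfl
      · rw [mcompR_cons0, mcompR_cons0, mcompR_l0, mcompR_l1, mcompR_add_left]
        simp only [Pi.add_apply]
        rw [ih w hw' (lshiftR 0 c) d e]
        rw [mcompR_shR]
        have hc1 : shR (mcompR d e) (mcompR (mcompR (lshiftR 1 c) d) e) w
            = shR (mcompR d e) (mcompR (lshiftR 1 c) (gopR d e)) w := by
          apply shR_congr
          intro v hv
          exact ih v (le_trans hv hw') (lshiftR 1 c) d e
        have hc2 : shR e (mcompR (mcompR (lshiftR 1 c) d) e) w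
            = shR e (mcompR (lshiftR 1 c) (gopR d e)) w := by
          apply shR_congr
          intro v hv
          exact ih v (le_trans hv hw') (lshiftR 1 c) d e
        rw [hc1, hc2]
        have hgop : shR (gopR d e) (mcompR (lshiftR 1 c) (gopR d e)) w
            = shR e (mcompR (lshiftR 1 c) (gopR d e)) w
              + shR (mcompR d e) (mcompR (lshiftR 1 c) (gopR d e)) w := by
          rw [show (gopR d e) = e + mcompR d e from rfl, shR_add_left]
        rw [hgop]
        ring
      · rw [mcompR_cons1, mcompR_cons1, mcompR_l1]
        exact ih w hw' (lshiftR 1 c) d e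

lemma mcompR_assoc (c d e : Word → R) (w : Word) :
    mcompR (mcompR c d) e w = mcompR c (gopR d e) w :=
  mcompR_assoc_aux w.length w le_rfl c d e

lemma mcompR_zero_left (d : Word → R) : mcompR 0 d = 0 := by
  funext w
  simp [mcompR]

lemma phiR_zero_d : ∀ ξ : Word, phiR (0 : Word → R) ξ oneR = indR ξ := by
  intro ξ
  induction ξ with
  | nil => rfl
  | cons i ξ ih =>
    rw [phiR_cons, ih]
    rcases fin2 i with rfl | rfl
    · rw [phiLetterR_zero, lconcatR_indR]
    · rw [phiLetterR_one]
      have hsh : shR (0 : Word → R) (indR ξ) = 0 := funext fun v => shR_zero_left v _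
      have hlc : lconcatR 0 (0 : Word → R) = 0 := by
        funext v
        cases v with
        | nil => rfl
        | cons j u => simp [lconcatR_cons]
      rw [hsh, hlc, add_zero, lconcatR_indR]

lemma mcompR_zero_right (c : Word → R) : mcompR c 0 = c := by
  funext w
  show ∑ ξ ∈ allW w.length, c ξ * phiR 0 ξ oneR w = c w
  have h : ∀ ξ : Word, phiR (0 : Word → R) ξ oneR w = if w = ξ then 1 else 0 := by
    intro ξ; rw [phiR_zero_d]; rfl
  rw [Finset.sum_eq_single_of_mem w ((mem_allW _ _).mpr le_rfl)]
  · rw [h, if_pos rfl, mul_one]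
  · intro ξ _ hne
    rw [h, if_neg (fun hh => hne hh.symm)]
    ring

lemma gopR_zero_left (c : Word → R) : gopR 0 c = c := by
  show c + mcompR 0 c = c
  rw [mcompR_zero_left, add_zero]

lemma gopR_zero_right (c : Word → R) : gopR c 0 = c := by
  show 0 + mcompR c 0 = c
  rw [mcompR_zero_right, zero_add]

lemma gopR_assoc (c d e : Word → R) : gopR (gopR c d) e = gopR c (gopR d e) := by
  funext w
  show e w + mcompR (d + mcompR c d) e w = (gopR d e) w + mcompR c (gopR d e) w
  rw [mcompR_add_left]
  simp only [Pi.add_apply]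
  rw [mcompR_assoc]
  show e w + (mcompR d e w + mcompR c (gopR d e) w)
      = e w + mcompR d e w + mcompR c (gopR d e) w
  ring

end Generic

end OFHAux

namespace OFHAux

open Paper MvPolynomial

/-! ### Bridge to the concrete real-series definitions -/

lemma sh_eq : ∀ (w : Word) (c d : Series), sh c d w = shR c d w := by
  intro w
  induction w with
  | nil => intro c d; rfl
  | cons i w ih =>
    intro c d
    show shuffleFn (lshift i c) d w + shuffleFn c (lshift i d) w = _
    exact congrArg₂ (· + ·) (ih _ _) (ih _ _)

lemma lconcat_eq (i : Fin 2) (c : Series) : lconcat i c = lconcatR i c := rfl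

lemma one_eq : Paper.one = (oneR : Word → ℝ) := rfl

lemma phiLetter_eq (d : Series) (i : Fin 2) (e : Series) :
    phiLetter d i e = phiLetterR d i e := by
  unfold phiLetter phiLetterR
  rw [show sh d e = shR d e from funext fun w => sh_eq w d e]
  rfl

lemma phi_eq (d : Series) : ∀ (ξ : Word) (e : Series), phi d ξ e = phiR d ξ e := by
  intro ξ
  induction ξ with
  | nil => intro e; rfl
  | cons i ξ ih =>
    intro e
    show phiLetter d i (phi d ξ e) = _
    rw [ih, phiLetter_eq]
    rfl

lemma mcomp_eq (c d : Series) : mcomp c d = mcompR c d := by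
  funext w
  show ∑' η : Word, c η * phi d η Paper.one w = _
  rw [tsum_eq_sum (s := allW w.length)
    (fun ξ hξ => by
      rw [mem_allW] at hξ
      rw [phi_eq, one_eq, phiR_vanish_len d ξ w (by omega)]
      ring)]
  exact Finset.sum_congr rfl fun ξ _ => by rw [phi_eq, one_eq]

lemma gop_eq (c d : Series) : gop c d = gopR c d := by
  unfold gop gopR
  rw [mcomp_eq]

/-! ### Ring-hom commutation -/

section Map

variable {R S : Type*} [CommRing R] [CommRing S] (f : R →+* S)

lemma map_lconcatR (i : Fin 2) (c : Word → R) :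
    (fun w => f (lconcatR i c w)) = lconcatR i (fun w => f (c w)) := by
  funext w
  cases w with
  | nil => simp
  | cons j v => rw [lconcatR_cons, lconcatR_cons, apply_ite f, f.map_zero]

lemma map_shR : ∀ (w : Word) (c d : Word → R),
    f (shR c d w) = shR (fun v => f (c v)) (fun v => f (d v)) w := by
  intro w
  induction w with
  | nil => intro c d; simp
  | cons i w ih =>
    intro c d
    rw [shR_cons, shR_cons, f.map_add, ih, ih]
    rfl

lemma map_oneR : (fun w => f (oneR w)) = (oneR : Word → S) := by
  funext w
  cases w with
  | nil => simp
  | cons j v => simp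

lemma map_phiR (d : Word → R) : ∀ (ξ : Word) (e : Word → R),
    (fun w => f (phiR d ξ e w)) = phiR (fun v => f (d v)) ξ (fun v => f (e v)) := by
  intro ξ
  induction ξ with
  | nil => intro e; rfl
  | cons i ξ ih =>
    intro e
    rw [phiR_cons, phiR_cons, ← ih]
    rcases fin2 i with rfl | rfl
    · rw [phiLetterR_zero, phiLetterR_zero, map_lconcatR]
    · rw [phiLetterR_one, phiLetterR_one]
      funext w
      rw [Pi.add_apply, Pi.add_apply, f.map_add,
        congrFun (map_lconcatR f 1 (phiR d ξ e)) w,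
        congrFun (map_lconcatR f 0 (shR d (phiR d ξ e))) w]
      congr 1
      have hsh : (fun v => f (shR d (phiR d ξ e) v))
          = shR (fun v => f (d v)) (fun v => f (phiR d ξ e v)) :=
        funext fun v => map_shR f v d (phiR d ξ e)
      rw [hsh]

lemma map_phiR_oneR (d : Word → R) (ξ w : Word) :
    f (phiR d ξ oneR w) = phiR (fun v => f (d v)) ξ oneR w := by
  have h := congrFun (map_phiR f d ξ oneR) w
  rw [h, show (fun v => f (oneR v)) = (oneR : Word → S) from map_oneR f]

lemma map_mcompR (c d : Word → R) (w : Word) :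
    f (mcompR c d w) = mcompR (fun v => f (c v)) (fun v => f (d v)) w := by
  show f (∑ ξ ∈ allW w.length, c ξ * phiR d ξ oneR w) = _
  rw [map_sum]
  exact Finset.sum_congr rfl fun ξ _ => by rw [f.map_mul, map_phiR_oneR]

end Map

/-! ### The coproduct -/

def gS : Word → H := aw

def PH (ξ η : Word) : H := phiR gS ξ oneR η

lemma evalS_gS (d : Series) : (fun η => evalS d (gS η)) = d := by
  funext η
  simp [evalS, gS, aw]

lemma evalS_PH (d : Series) (ξ η : Word) : evalS d (PH ξ η) = phiR d ξ oneR η := by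
  have h := map_phiR_oneR (evalS d).toRingHom gS ξ η
  simp only [AlgHom.toRingHom_eq_coe, RingHom.coe_coe] at h
  rw [evalS_gS d] at h
  exact h

def DeltaFun (η : Word) : H ⊗[ℝ] H :=
  (∑ ξ ∈ allW η.length, aw ξ ⊗ₜ[ℝ] PH ξ η) + 1 ⊗ₜ[ℝ] aw η

def Delta : H →ₐ[ℝ] H ⊗[ℝ] H := MvPolynomial.aeval DeltaFun

lemma Delta_aw (η : Word) : Delta (aw η) = DeltaFun η := by
  unfold Delta aw
  exact MvPolynomial.aeval_X _ _

def pairHom (c d : Series) : H ⊗[ℝ] H →ₐ[ℝ] ℝ :=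
  Algebra.TensorProduct.lift (evalS c) (evalS d) fun _ _ => Commute.all _ _

lemma pairHom_tmul (c d : Series) (p q : H) :
    pairHom c d (p ⊗ₜ[ℝ] q) = evalS c p * evalS d q :=
  Algebra.TensorProduct.lift_tmul _ _ _ _ _

lemma evalPair_eq (c d : Series) (t : H ⊗[ℝ] H) : evalPair c d t = pairHom c d t := by
  induction t with
  | zero => simp
  | tmul p q =>
    rw [pairHom_tmul]
    simp [evalPair]
  | add x y hx hy => rw [map_add, map_add, hx, hy]

lemma pairHom_Delta_comp (c d : Series) :
    (pairHom c d).comp Delta = evalS (gopR c d) := by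
  apply MvPolynomial.algHom_ext
  intro η
  show pairHom c d (Delta (X η)) = evalS (gopR c d) (X η)
  rw [show Delta (X η) = DeltaFun η from Delta_aw η]
  unfold DeltaFun
  rw [map_add, map_sum, pairHom_tmul, map_one, one_mul]
  have h1 : ∀ ξ ∈ allW η.length, pairHom c d (aw ξ ⊗ₜ[ℝ] PH ξ η) = c ξ * phiR d ξ oneR η := by
    intro ξ _
    rw [pairHom_tmul, evalS_PH]
    congr 1
    simp [evalS, aw]
  rw [Finset.sum_congr rfl h1]
  have h2 : evalS (gopR c d) (X η) = d η + mcompR c d η := by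
    simp only [evalS, aeval_X]
    rfl
  rw [h2]
  have h3 : evalS d (aw η) = d η := by simp [evalS, aw]
  rw [h3]
  exact add_comm _ _

lemma pairHom_Delta (c d : Series) (p : H) :
    pairHom c d (Delta p) = evalS (gopR c d) p :=
  congrFun (congrArg (fun (g : H →ₐ[ℝ] ℝ) => (g : H → ℝ)) (pairHom_Delta_comp c d)) p

lemma isFBCoproduct_Delta : IsFBCoproduct Delta := by
  intro η c d
  rw [evalPair_eq, show Delta (aw η) = DeltaFun η from Delta_aw η]
  unfold DeltaFun
  rw [map_add, map_sum, pairHom_tmul, map_one, one_mul]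
  have h1 : ∀ ξ ∈ allW η.length, pairHom c d (aw ξ ⊗ₜ[ℝ] PH ξ η) = c ξ * phiR d ξ oneR η := by
    intro ξ _
    rw [pairHom_tmul, evalS_PH]
    congr 1
    simp [evalS, aw]
  rw [Finset.sum_congr rfl h1]
  have h3 : evalS d (aw η) = d η := by simp [evalS, aw]
  rw [h3, mcomp_eq]
  rfl

end OFHAux

namespace OFHAux

open Paper MvPolynomial

set_option maxHeartbeats 1000000
set_option synthInstance.maxHeartbeats 400000

/-! ### Separation of points for tensor squares and cubes -/

def fwd2 : H ⊗[ℝ] H →ₐ[ℝ] MvPolynomial (Word ⊕ Word) ℝ :=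
  Algebra.TensorProduct.lift (aeval fun s => X (Sum.inl s)) (aeval fun s => X (Sum.inr s))
    fun _ _ => Commute.all _ _

def bwd2 : MvPolynomial (Word ⊕ Word) ℝ →ₐ[ℝ] H ⊗[ℝ] H :=
  aeval (Sum.elim (fun s => X s ⊗ₜ[ℝ] 1) (fun s => (1 : H) ⊗ₜ[ℝ] X s))

lemma fwd2_tmul (p q : H) : fwd2 (p ⊗ₜ[ℝ] q) =
    aeval (fun s => X (Sum.inl s)) p * aeval (fun s => X (Sum.inr s)) q :=
  Algebra.TensorProduct.lift_tmul _ _ _ _ _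

lemma bwd2_aevalL :
    bwd2.comp (aeval fun s => X (Sum.inl s) : H →ₐ[ℝ] MvPolynomial (Word ⊕ Word) ℝ)
      = Algebra.TensorProduct.includeLeft := by
  apply MvPolynomial.algHom_ext
  intro s
  simp [bwd2]

lemma bwd2_aevalR :
    bwd2.comp (aeval fun s => X (Sum.inr s) : H →ₐ[ℝ] MvPolynomial (Word ⊕ Word) ℝ)
      = Algebra.TensorProduct.includeRight := by
  apply MvPolynomial.algHom_ext
  intro s
  simp [bwd2]

lemma bwd2_fwd2_apply (t : H ⊗[ℝ] H) : bwd2 (fwd2 t) = t := by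
  induction t with
  | zero => simp
  | tmul p q =>
    rw [fwd2_tmul, map_mul]
    have hL := AlgHom.congr_fun bwd2_aevalL p
    have hR := AlgHom.congr_fun bwd2_aevalR q
    simp only [AlgHom.coe_comp, Function.comp_apply] at hL hR
    rw [hL, hR]
    simp [Algebra.TensorProduct.tmul_mul_tmul]
  | add x y hx hy => rw [map_add, map_add, hx, hy]

lemma eval_fwd2 (c d : Series) (t : H ⊗[ℝ] H) :
    aeval (Sum.elim c d) (fwd2 t) = pairHom c d t := by
  induction t with
  | zero => simp
  | tmul p q =>
    rw [fwd2_tmul, map_mul, pairHom_tmul]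
    have hL : (aeval (Sum.elim c d)).comp (aeval fun s => X (Sum.inl s) : H →ₐ[ℝ] _)
        = evalS c := by
      apply MvPolynomial.algHom_ext
      intro s
      simp [evalS]
    have hR : (aeval (Sum.elim c d)).comp (aeval fun s => X (Sum.inr s) : H →ₐ[ℝ] _)
        = evalS d := by
      apply MvPolynomial.algHom_ext
      intro s
      simp [evalS]
    rw [← AlgHom.congr_fun hL p, ← AlgHom.congr_fun hR q]
    simp
  | add x y hx hy => simp only [map_add, hx, hy]

lemma pair_ext {t t' : H ⊗[ℝ] H}
    (h : ∀ c d : Series, pairHom c d t = pairHom c d t') : t = t' := by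
  have hp : fwd2 t = fwd2 t' := by
    apply MvPolynomial.funext
    intro x
    rw [← MvPolynomial.coe_aeval_eq_eval]
    have hx : x = Sum.elim (fun s => x (Sum.inl s)) (fun s => x (Sum.inr s)) := by
      funext s
      cases s <;> rfl
    show aeval x (fwd2 t) = aeval x (fwd2 t')
    rw [hx, eval_fwd2, eval_fwd2]
    exact h _ _
  have h2 := congrArg bwd2 hp
  rwa [bwd2_fwd2_apply, bwd2_fwd2_apply] at h2

def tripleHom (c d e : Series) : H ⊗[ℝ] (H ⊗[ℝ] H) →ₐ[ℝ] ℝ :=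
  Algebra.TensorProduct.lift (evalS c) (pairHom d e) fun _ _ => Commute.all _ _

lemma tripleHom_tmul (c d e : Series) (p : H) (u : H ⊗[ℝ] H) :
    tripleHom c d e (p ⊗ₜ[ℝ] u) = evalS c p * pairHom d e u :=
  Algebra.TensorProduct.lift_tmul _ _ _ _ _

def fwd3 : H ⊗[ℝ] (H ⊗[ℝ] H) →ₐ[ℝ] MvPolynomial (Word ⊕ (Word ⊕ Word)) ℝ :=
  Algebra.TensorProduct.lift (aeval fun s => X (Sum.inl s))
    ((rename Sum.inr).comp fwd2) fun _ _ => Commute.all _ _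

def bwd3 : MvPolynomial (Word ⊕ (Word ⊕ Word)) ℝ →ₐ[ℝ] H ⊗[ℝ] (H ⊗[ℝ] H) :=
  aeval (Sum.elim (fun s => X s ⊗ₜ[ℝ] (1 : H ⊗[ℝ] H))
    (Sum.elim (fun s => (1 : H) ⊗ₜ[ℝ] ((X s : H) ⊗ₜ[ℝ] (1 : H)))
      (fun s => (1 : H) ⊗ₜ[ℝ] ((1 : H) ⊗ₜ[ℝ] (X s : H)))) :
    Word ⊕ (Word ⊕ Word) → H ⊗[ℝ] (H ⊗[ℝ] H))

lemma fwd3_tmul (p : H) (u : H ⊗[ℝ] H) : fwd3 (p ⊗ₜ[ℝ] u) =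
    aeval (fun s => X (Sum.inl s)) p * rename Sum.inr (fwd2 u) :=
  Algebra.TensorProduct.lift_tmul _ _ _ _ _

lemma bwd3_left (p : H) :
    bwd3 (aeval (fun s => X (Sum.inl s) : Word → MvPolynomial (Word ⊕ (Word ⊕ Word)) ℝ) p)
      = p ⊗ₜ[ℝ] (1 : H ⊗[ℝ] H) := by
  have hc : bwd3.comp (aeval fun s => X (Sum.inl s) : H →ₐ[ℝ] _)
      = Algebra.TensorProduct.includeLeft := by
    apply MvPolynomial.algHom_ext
    intro s
    simp [bwd3]
  exact AlgHom.congr_fun hc p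

lemma bwd3_right (u : H ⊗[ℝ] H) :
    bwd3 (rename Sum.inr (fwd2 u)) = (1 : H) ⊗ₜ[ℝ] u := by
  induction u with
  | zero => simp [TensorProduct.tmul_zero]
  | tmul q r =>
    rw [fwd2_tmul, map_mul, map_mul]
    have hq : bwd3.comp ((rename Sum.inr).comp
        (aeval fun s => X (Sum.inl s) : H →ₐ[ℝ] MvPolynomial (Word ⊕ Word) ℝ))
        = Algebra.TensorProduct.includeRight.comp Algebra.TensorProduct.includeLeft := by
      apply MvPolynomial.algHom_ext
      intro s
      simp [bwd3]
    have hr : bwd3.comp ((rename Sum.inr).comp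
        (aeval fun s => X (Sum.inr s) : H →ₐ[ℝ] MvPolynomial (Word ⊕ Word) ℝ))
        = Algebra.TensorProduct.includeRight.comp Algebra.TensorProduct.includeRight := by
      apply MvPolynomial.algHom_ext
      intro s
      simp [bwd3]
    have hq' := AlgHom.congr_fun hq q
    have hr' := AlgHom.congr_fun hr r
    simp only [AlgHom.coe_comp, Function.comp_apply] at hq' hr'
    rw [hq', hr']
    simp [Algebra.TensorProduct.tmul_mul_tmul]
  | add x y hx hy => rw [map_add, map_add, map_add, hx, hy, TensorProduct.tmul_add]

lemma bwd3_fwd3_apply (t : H ⊗[ℝ] (H ⊗[ℝ] H)) : bwd3 (fwd3 t) = t := by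
  induction t with
  | zero => simp
  | tmul p u =>
    rw [fwd3_tmul, map_mul, bwd3_left p, bwd3_right u]
    simp [Algebra.TensorProduct.tmul_mul_tmul]
  | add x y hx hy => rw [map_add, map_add, hx, hy]

lemma eval_fwd3 (c d e : Series) (t : H ⊗[ℝ] (H ⊗[ℝ] H)) :
    aeval (Sum.elim c (Sum.elim d e)) (fwd3 t) = tripleHom c d e t := by
  induction t with
  | zero => simp
  | tmul p u =>
    rw [fwd3_tmul, map_mul, tripleHom_tmul]
    have hL : (aeval (Sum.elim c (Sum.elim d e))).comp
        (aeval fun s => X (Sum.inl s) : H →ₐ[ℝ] _) = evalS c := by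
      apply MvPolynomial.algHom_ext
      intro s
      simp [evalS]
    rw [← AlgHom.congr_fun hL p]
    have hR : aeval (Sum.elim c (Sum.elim d e)) (rename Sum.inr (fwd2 u))
        = pairHom d e u := by
      rw [aeval_rename]
      have : (Sum.elim c (Sum.elim d e)) ∘ Sum.inr = Sum.elim d e := by
        funext s
        cases s <;> rfl
      rw [this, eval_fwd2]
    rw [hR]
    simp
  | add x y hx hy => simp only [map_add, hx, hy]

lemma triple_ext {t t' : H ⊗[ℝ] (H ⊗[ℝ] H)}
    (h : ∀ c d e : Series, tripleHom c d e t = tripleHom c d e t') : t = t' := by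
  have hp : fwd3 t = fwd3 t' := by
    apply MvPolynomial.funext
    intro x
    rw [← MvPolynomial.coe_aeval_eq_eval]
    have hx : x = Sum.elim (fun s => x (Sum.inl s))
        (Sum.elim (fun s => x (Sum.inr (Sum.inl s))) (fun s => x (Sum.inr (Sum.inr s)))) := by
      funext s
      rcases s with s | s | s <;> rfl
    show aeval x (fwd3 t) = aeval x (fwd3 t')
    rw [hx, eval_fwd3, eval_fwd3]
    exact h _ _ _
  have h2 := congrArg bwd3 hp
  rwa [bwd3_fwd3_apply, bwd3_fwd3_apply] at h2

end OFHAux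

namespace OFHAux

open Paper MvPolynomial

set_option maxHeartbeats 1000000
set_option synthInstance.maxHeartbeats 400000

lemma H_ext {p q : H} (h : ∀ c : Series, evalS c p = evalS c q) : p = q := by
  apply MvPolynomial.funext
  intro x
  rw [← MvPolynomial.coe_aeval_eq_eval]
  exact h x

lemma assoc_eval (c d e : Series) : ∀ (u : H ⊗[ℝ] H) (b : H),
    tripleHom c d e (TensorProduct.assoc ℝ H H H (u ⊗ₜ[ℝ] b))
      = pairHom c d u * evalS e b := by
  intro u b
  induction u with
  | zero => simp
  | tmul x y =>
    rw [TensorProduct.assoc_tmul, tripleHom_tmul, pairHom_tmul, pairHom_tmul]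
    ring
  | add x y hx hy =>
    rw [TensorProduct.add_tmul, map_add, map_add, hx, hy, map_add]
    ring

lemma coassoc_left (c d e : Series) (t : H ⊗[ℝ] H) :
    tripleHom c d e (TensorProduct.assoc ℝ H H H
        (TensorProduct.map Delta.toLinearMap LinearMap.id t))
      = pairHom (gopR c d) e t := by
  induction t with
  | zero => simp
  | tmul a b =>
    rw [TensorProduct.map_tmul]
    show tripleHom c d e (TensorProduct.assoc ℝ H H H ((Delta a) ⊗ₜ[ℝ] b)) = _
    rw [assoc_eval, pairHom_Delta, pairHom_tmul]
  | add x y hx hy => simp only [map_add, hx, hy]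

lemma coassoc_right (c d e : Series) (t : H ⊗[ℝ] H) :
    tripleHom c d e (TensorProduct.map LinearMap.id Delta.toLinearMap t)
      = pairHom c (gopR d e) t := by
  induction t with
  | zero => simp
  | tmul a b =>
    rw [TensorProduct.map_tmul]
    show tripleHom c d e (a ⊗ₜ[ℝ] (Delta b)) = _
    rw [tripleHom_tmul, pairHom_Delta, pairHom_tmul]
  | add x y hx hy => simp only [map_add, hx, hy]

theorem Delta_coassoc (p : H) :
    TensorProduct.assoc ℝ H H H
        (TensorProduct.map Delta.toLinearMap LinearMap.id (Delta p)) =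
      TensorProduct.map LinearMap.id Delta.toLinearMap (Delta p) := by
  apply triple_ext
  intro c d e
  rw [coassoc_left, coassoc_right, pairHom_Delta, pairHom_Delta, gopR_assoc]

lemma lid_eval (c : Series) (t : H ⊗[ℝ] H) :
    evalS c (TensorProduct.lid ℝ H (TensorProduct.map counit.toLinearMap LinearMap.id t))
      = pairHom 0 c t := by
  induction t with
  | zero => simp
  | tmul a b =>
    rw [TensorProduct.map_tmul, pairHom_tmul]
    show evalS c (TensorProduct.lid ℝ H ((counit a) ⊗ₜ[ℝ] b)) = _
    rw [TensorProduct.lid_tmul, map_smul]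
    show counit a * evalS c b = evalS 0 a * evalS c b
    rfl
  | add x y hx hy => simp only [map_add, hx, hy]

lemma rid_eval (c : Series) (t : H ⊗[ℝ] H) :
    evalS c (TensorProduct.rid ℝ H (TensorProduct.map LinearMap.id counit.toLinearMap t))
      = pairHom c 0 t := by
  induction t with
  | zero => simp
  | tmul a b =>
    rw [TensorProduct.map_tmul, pairHom_tmul]
    show evalS c (TensorProduct.rid ℝ H (a ⊗ₜ[ℝ] (counit b))) = _
    rw [TensorProduct.rid_tmul, map_smul]
    show counit b * evalS c a = evalS c a * evalS 0 b
    rw [mul_comm]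
    rfl
  | add x y hx hy => simp only [map_add, hx, hy]

theorem Delta_counit_l (p : H) :
    TensorProduct.lid ℝ H
        (TensorProduct.map counit.toLinearMap LinearMap.id (Delta p)) = p := by
  apply H_ext
  intro c
  rw [lid_eval, pairHom_Delta, gopR_zero_left]

theorem Delta_counit_r (p : H) :
    TensorProduct.rid ℝ H
        (TensorProduct.map LinearMap.id counit.toLinearMap (Delta p)) = p := by
  apply H_ext
  intro c
  rw [rid_eval, pairHom_Delta, gopR_zero_right]

lemma pairHom_comm (c d : Series) (t : H ⊗[ℝ] H) :
    pairHom c d (TensorProduct.comm ℝ H H t) = pairHom d c t := by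
  induction t with
  | zero => simp
  | tmul a b =>
    rw [TensorProduct.comm_tmul, pairHom_tmul, pairHom_tmul, mul_comm]
  | add x y hx hy => simp only [map_add, hx, hy]

lemma phiR_single1 (d : Series) : phiR d [1] oneR [0] = d [] := by
  have h := phiR_cons_apply1 d [] [] 0
  rw [h, if_neg (by decide), if_pos rfl, zero_add, shR_nil, phiR_nil, oneR_nil, mul_one]

theorem Delta_noncocomm :
    ∃ p : H, TensorProduct.comm ℝ H H (Delta p) ≠ Delta p := by
  have c1 : Series := indR [1]
  refine ⟨aw [0], fun hEq => ?_⟩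
  have h := congrArg (pairHom (indR [1] : Series) (indR [] : Series)) hEq
  rw [pairHom_comm, pairHom_Delta, pairHom_Delta] at h
  have h1 : gopR (indR [] : Series) (indR [1] : Series) [0] = 0 := by
    show (indR [1] : Series) [0] + mcompR (indR [] : Series) (indR [1] : Series) [0] = 0
    have hm : mcompR (indR [] : Series) (indR [1] : Series) [0] = 0 := by
      show ∑ ξ ∈ allW 1, (indR [] : Series) ξ * phiR (indR [1] : Series) ξ oneR [0] = 0
      rw [Finset.sum_eq_single_of_mem ([] : Word) ((mem_allW 1 []).mpr (by simp))]
      · show (indR [] : Series) [] * phiR (indR [1] : Series) [] oneR [0] = 0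
        rw [phiR_nil, show (oneR : Series) [0] = 0 from oneR_cons 0 [], mul_zero]
      · intro ξ _ hne
        rw [show (indR [] : Series) ξ = (0 : ℝ) from if_neg hne, zero_mul]
    rw [hm, show (indR [1] : Series) [0] = (0 : ℝ) from if_neg (by decide), add_zero]
  have h2 : gopR (indR [1] : Series) (indR [] : Series) [0] = 1 := by
    show (indR [] : Series) [0] + mcompR (indR [1] : Series) (indR [] : Series) [0] = 1
    have hm : mcompR (indR [1] : Series) (indR [] : Series) [0] = 1 := by
      show ∑ ξ ∈ allW 1, (indR [1] : Series) ξ * phiR (indR [] : Series) ξ oneR [0] = 1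
      rw [Finset.sum_eq_single_of_mem ([1] : Word) ((mem_allW 1 [1]).mpr (by simp))]
      · rw [phiR_single1, show (indR [1] : Series) [1] = (1 : ℝ) from if_pos rfl,
          show (indR [] : Series) [] = (1 : ℝ) from if_pos rfl, mul_one]
      · intro ξ _ hne
        rw [show (indR [1] : Series) ξ = (0 : ℝ) from if_neg hne, zero_mul]
    rw [hm, show (indR [] : Series) [0] = (0 : ℝ) from if_neg (by decide), zero_add]
  have h3 : (gopR (indR [] : Series) (indR [1] : Series)) [0]
      = (gopR (indR [1] : Series) (indR [] : Series)) [0] := by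
    have ha : evalS (gopR (indR [] : Series) (indR [1] : Series)) (aw [0])
        = (gopR (indR [] : Series) (indR [1] : Series)) [0] := by simp [evalS, aw]
    have hb : evalS (gopR (indR [1] : Series) (indR [] : Series)) (aw [0])
        = (gopR (indR [1] : Series) (indR [] : Series)) [0] := by simp [evalS, aw]
    rw [← ha, ← hb, h]
  rw [h1, h2] at h3
  exact zero_ne_one h3

end OFHAux

namespace OFHAux

open Paper MvPolynomial

set_option maxHeartbeats 1000000
set_option synthInstance.maxHeartbeats 400000

/-! ### Grading -/

lemma degW_eq (η : Word) : degW η = wgt wL η + 1 := by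
  unfold degW
  have h : wgt wL η = 2 * η.count 0 + η.count 1 := by
    induction η with
    | nil => simp
    | cons j v ih =>
      rw [wgt_cons, ih]
      rcases fin2 j with rfl | rfl <;> simp [wL, List.count_cons] <;> omega
  omega

def HomOff (a : ℤ) (c : Word → H) : Prop :=
  ∀ (v : Word) (m : Word →₀ ℕ), MvPolynomial.coeff m (c v) ≠ 0 →
    ((Finsupp.weight degW m : ℕ) : ℤ) = (wgt wL v : ℤ) + a

lemma weight_single (v : Word) :
    Finsupp.weight degW (Finsupp.single v 1) = degW v := by
  simp [Finsupp.weight_apply, Finsupp.sum_single_index]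

lemma homOff_gS : HomOff 1 gS := by
  classical
  intro v m hm
  rw [show gS v = X v from rfl, coeff_X'] at hm
  by_cases h : Finsupp.single v 1 = m
  · rw [← h, weight_single, degW_eq]
    push_cast
    ring
  · rw [if_neg h] at hm
    exact absurd rfl hm

lemma homOff_oneR : HomOff 0 (oneR : Word → H) := by
  classical
  intro v m hm
  cases v with
  | nil =>
    rw [oneR_nil, coeff_one] at hm
    by_cases h : 0 = m
    · rw [← h]
      simp
    · rw [if_neg h] at hm
      exact absurd rfl hm
  | cons j u =>
    rw [oneR_cons] at hm
    simp at hm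

lemma homOff_add {a : ℤ} {c c' : Word → H} (h : HomOff a c) (h' : HomOff a c') :
    HomOff a (c + c') := by
  intro v m hm
  rw [Pi.add_apply, coeff_add] at hm
  by_cases h1 : MvPolynomial.coeff m (c v) ≠ 0
  · exact h v m h1
  · push_neg at h1
    rw [h1, zero_add] at hm
    exact h' v m hm

lemma homOff_lshift {a : ℤ} {c : Word → H} (h : HomOff a c) (i : Fin 2) :
    HomOff (a + wL i) (lshiftR i c) := by
  intro v m hm
  have h2 := h (i :: v) m hm
  rw [wgt_cons] at h2
  push_cast at h2 ⊢
  omega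

lemma homOff_lconcat {a : ℤ} {e : Word → H} (h : HomOff a e) (i : Fin 2) :
    HomOff (a - wL i) (lconcatR i e) := by
  intro v m hm
  cases v with
  | nil => rw [lconcatR_nil] at hm; simp at hm
  | cons j u =>
    rw [lconcatR_cons] at hm
    by_cases hj : j = i
    · rw [if_pos hj] at hm
      have h2 := h u m hm
      subst hj
      rw [wgt_cons]
      push_cast at h2 ⊢
      omega
    · rw [if_neg hj] at hm
      simp at hm

lemma coeff_mul_decomp {p q : H} {m : Word →₀ ℕ} (hm : MvPolynomial.coeff m (p * q) ≠ 0) :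
    ∃ m1 m2, MvPolynomial.coeff m1 p ≠ 0 ∧ MvPolynomial.coeff m2 q ≠ 0 ∧ m1 + m2 = m := by
  classical
  have hsupp : m ∈ (p * q).support := mem_support_iff.mpr hm
  have h2 := MvPolynomial.support_mul p q hsupp
  rw [Finset.mem_add] at h2
  obtain ⟨m1, hm1, m2, hm2, h⟩ := h2
  exact ⟨m1, m2, mem_support_iff.mp hm1, mem_support_iff.mp hm2, h⟩

lemma homOff_shR : ∀ (v : Word) (c e : Word → H) (a b : ℤ),
    HomOff a c → HomOff b e →
    ∀ m, MvPolynomial.coeff m (shR c e v) ≠ 0 →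
      ((Finsupp.weight degW m : ℕ) : ℤ) = (wgt wL v : ℤ) + (a + b) := by
  intro v
  induction v with
  | nil =>
    intro c e a b hc he m hm
    rw [shR_nil] at hm
    obtain ⟨m1, m2, h1, h2, rfl⟩ := coeff_mul_decomp hm
    have e1 := hc [] m1 h1
    have e2 := he [] m2 h2
    have hw : Finsupp.weight degW (m1 + m2)
        = Finsupp.weight degW m1 + Finsupp.weight degW m2 := map_add _ _ _
    rw [hw]
    rw [wgt_nil] at e1 e2 ⊢
    push_cast at e1 e2 ⊢
    omega
  | cons j v ih =>
    intro c e a b hc he m hm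
    rw [shR_cons, coeff_add] at hm
    by_cases h1 : MvPolynomial.coeff m (shR (lshiftR j c) e v) ≠ 0
    · have h2 := ih (lshiftR j c) e (a + wL j) b (homOff_lshift hc j) he m h1
      rw [wgt_cons]
      push_cast at h2 ⊢
      omega
    · push_neg at h1
      rw [h1, zero_add] at hm
      have h2 := ih c (lshiftR j e) a (b + wL j) hc (homOff_lshift he j) m hm
      rw [wgt_cons]
      push_cast at h2 ⊢
      omega

lemma homOff_phiLetter {a : ℤ} {e : Word → H} (h : HomOff a e) (i : Fin 2) :
    HomOff (a - wL i) (phiLetterR gS i e) := by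
  rcases fin2 i with rfl | rfl
  · rw [phiLetterR_zero]
    exact homOff_lconcat h 0
  · rw [phiLetterR_one]
    apply homOff_add
    · exact homOff_lconcat h 1
    · have hsh : HomOff (1 + a) (shR gS e) := by
        intro v m hm
        have h2 := homOff_shR v gS e 1 a homOff_gS h m hm
        omega
      have h3 := homOff_lconcat hsh 0
      have heq : (a - (wL 1 : ℤ)) = (1 + a - (wL 0 : ℤ)) := by
        simp [wL]
        ring
      rw [heq]
      exact h3

lemma homOff_phiR_gS : ∀ (ξ : Word) {a : ℤ} {e : Word → H}, HomOff a e →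
    HomOff (a - wgt wL ξ) (phiR gS ξ e) := by
  intro ξ
  induction ξ with
  | nil =>
    intro a e h
    simp only [wgt_nil, Nat.cast_zero, sub_zero, phiR_nil]
    exact h
  | cons i ξ ih =>
    intro a e h
    rw [phiR_cons]
    have h2 := homOff_phiLetter (ih h) i
    have heq : a - ((wgt wL (i :: ξ) : ℕ) : ℤ) = (a - wgt wL ξ) - wL i := by
      rw [wgt_cons]
      push_cast
      ring
    rw [heq]
    exact h2

lemma homOff_PH (ξ η : Word) (m : Word →₀ ℕ) (hm : MvPolynomial.coeff m (PH ξ η) ≠ 0) :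
    ((Finsupp.weight degW m : ℕ) : ℤ) = (wgt wL η : ℤ) - wgt wL ξ := by
  have h := homOff_phiR_gS ξ homOff_oneR η m hm
  omega

lemma PH_isWH {ξ η : Word} (h : degW ξ ≤ degW η) :
    (PH ξ η).IsWeightedHomogeneous degW (degW η - degW ξ) := by
  intro m hm
  have h2 := homOff_PH ξ η m hm
  have h3 := degW_eq ξ
  have h4 := degW_eq η
  omega

lemma PH_zero_of_lt {ξ η : Word} (h : degW η < degW ξ) : PH ξ η = 0 := by
  apply H_ext
  intro c
  rw [evalS_PH, map_zero]
  exact phiR_vanish_wL c ξ η (by have := degW_eq ξ; have := degW_eq η; omega)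

lemma PH_diag (η : Word) : PH η η = 1 := by
  apply H_ext
  intro c
  rw [evalS_PH, map_one, phiR_diag c η η rfl]
  exact if_pos rfl

lemma PH_offdiag {ξ η : Word} (h : degW ξ = degW η) (hne : ξ ≠ η) : PH ξ η = 0 := by
  apply H_ext
  intro c
  rw [evalS_PH, map_zero,
    phiR_diag c ξ η (by have := degW_eq ξ; have := degW_eq η; omega)]
  exact if_neg fun hh => hne hh.symm

def Gsub (n : ℕ) : Submodule ℝ (H ⊗[ℝ] H) :=
  ⨆ (pq : ℕ × ℕ) (_ : pq.1 + pq.2 = n),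
    LinearMap.range (TensorProduct.map
      (weightedHomogeneousSubmodule ℝ degW pq.1).subtype
      (weightedHomogeneousSubmodule ℝ degW pq.2).subtype)

lemma mem_G_tmul {p q : H} {a b n : ℕ} (hp : p.IsWeightedHomogeneous degW a)
    (hq : q.IsWeightedHomogeneous degW b) (hab : a + b = n) :
    p ⊗ₜ[ℝ] q ∈ Gsub n := by
  apply Submodule.mem_iSup_of_mem (a, b)
  apply Submodule.mem_iSup_of_mem hab
  exact ⟨(⟨p, hp⟩ : weightedHomogeneousSubmodule ℝ degW a) ⊗ₜ[ℝ]
    (⟨q, hq⟩ : weightedHomogeneousSubmodule ℝ degW b), rfl⟩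

lemma range_mul {a b a' b' : ℕ} (x y : H ⊗[ℝ] H)
    (hx : x ∈ LinearMap.range (TensorProduct.map
      (weightedHomogeneousSubmodule ℝ degW a).subtype
      (weightedHomogeneousSubmodule ℝ degW b).subtype))
    (hy : y ∈ LinearMap.range (TensorProduct.map
      (weightedHomogeneousSubmodule ℝ degW a').subtype
      (weightedHomogeneousSubmodule ℝ degW b').subtype)) :
    x * y ∈ LinearMap.range (TensorProduct.map
      (weightedHomogeneousSubmodule ℝ degW (a + a')).subtype
      (weightedHomogeneousSubmodule ℝ degW (b + b')).subtype) := by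
  obtain ⟨s, rfl⟩ := hx
  obtain ⟨t, rfl⟩ := hy
  induction s with
  | zero => rw [map_zero, zero_mul]; exact zero_mem _
  | tmul ph qh =>
    induction t with
    | zero => rw [map_zero, mul_zero]; exact zero_mem _
    | tmul ph' qh' =>
      rw [TensorProduct.map_tmul, TensorProduct.map_tmul,
        Algebra.TensorProduct.tmul_mul_tmul]
      refine ⟨(⟨(ph : H) * (ph' : H), ph.2.mul ph'.2⟩ :
          weightedHomogeneousSubmodule ℝ degW (a + a')) ⊗ₜ[ℝ]
        (⟨(qh : H) * (qh' : H), qh.2.mul qh'.2⟩ :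
          weightedHomogeneousSubmodule ℝ degW (b + b')), rfl⟩
    | add u v hu hv =>
      rw [map_add, mul_add]
      exact add_mem hu hv
  | add u v hu hv =>
    rw [map_add, add_mul]
    exact add_mem hu hv

lemma G_mul {m n : ℕ} {x y : H ⊗[ℝ] H} (hx : x ∈ Gsub m) (hy : y ∈ Gsub n) :
    x * y ∈ Gsub (m + n) := by
  refine Submodule.iSup_induction _ (motive := fun x => x * y ∈ Gsub (m + n)) hx ?_ ?_ ?_
  · intro pq x' hx'
    show x' * y ∈ Gsub (m + n)
    by_cases hpq : pq.1 + pq.2 = m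
    · rw [iSup_pos hpq] at hx'
      refine Submodule.iSup_induction _ (motive := fun y => x' * y ∈ Gsub (m + n)) hy ?_ ?_ ?_
      · intro pq' y' hy'
        show x' * y' ∈ Gsub (m + n)
        by_cases hpq' : pq'.1 + pq'.2 = n
        · rw [iSup_pos hpq'] at hy'
          have h2 := range_mul x' y' hx' hy'
          apply Submodule.mem_iSup_of_mem (pq.1 + pq'.1, pq.2 + pq'.2)
          apply Submodule.mem_iSup_of_mem (by omega)
          exact h2
        · rw [iSup_neg hpq', Submodule.mem_bot] at hy'
          rw [hy', mul_zero]
          exact zero_mem _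
      · show x' * (0 : H ⊗[ℝ] H) ∈ Gsub (m + n)
        rw [mul_zero]
        exact zero_mem _
      · intro u v hu hv
        show x' * (u + v) ∈ Gsub (m + n)
        rw [mul_add]
        exact add_mem hu hv
    · rw [iSup_neg hpq, Submodule.mem_bot] at hx'
      rw [hx', zero_mul]
      exact zero_mem _
  · show (0 : H ⊗[ℝ] H) * y ∈ Gsub (m + n)
    rw [zero_mul]
    exact zero_mem _
  · intro u v hu hv
    show (u + v) * y ∈ Gsub (m + n)
    rw [add_mul]
    exact add_mem hu hv

lemma G_one : (1 : H ⊗[ℝ] H) ∈ Gsub 0 := by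
  rw [Algebra.TensorProduct.one_def]
  exact mem_G_tmul (isWeightedHomogeneous_one ℝ degW) (isWeightedHomogeneous_one ℝ degW) rfl

lemma G_pow {k : ℕ} {x : H ⊗[ℝ] H} (hx : x ∈ Gsub k) :
    ∀ j : ℕ, x ^ j ∈ Gsub (j * k) := by
  intro j
  induction j with
  | zero => rw [pow_zero, Nat.zero_mul]; exact G_one
  | succ j ih =>
    rw [pow_succ, show (j + 1) * k = j * k + k by ring]
    exact G_mul ih hx

lemma Delta_aw_mem (η : Word) : Delta (aw η) ∈ Gsub (degW η) := by
  rw [Delta_aw]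
  unfold DeltaFun
  apply add_mem
  · apply Submodule.sum_mem
    intro ξ _
    by_cases h : degW η < degW ξ
    · rw [PH_zero_of_lt h, TensorProduct.tmul_zero]
      exact zero_mem _
    · push_neg at h
      exact mem_G_tmul (isWeightedHomogeneous_X ℝ degW ξ) (PH_isWH h) (by omega)
  · exact mem_G_tmul (isWeightedHomogeneous_one ℝ degW)
      (isWeightedHomogeneous_X ℝ degW η) (by omega)

lemma prod_mem_G (m : Word →₀ ℕ) (s : Finset Word) :
    (∏ η ∈ s, Delta (X η) ^ m η) ∈ Gsub (∑ η ∈ s, m η * degW η) := by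
  classical
  induction s using Finset.induction_on with
  | empty => simpa using G_one
  | insert a s hx ih =>
    rw [Finset.prod_insert hx, Finset.sum_insert hx]
    exact G_mul (G_pow (Delta_aw_mem a) (m a)) ih

lemma Delta_mem {n : ℕ} {p : H} (hp : p.IsWeightedHomogeneous degW n) :
    Delta p ∈ Gsub n := by
  classical
  rw [p.as_sum, map_sum]
  apply Submodule.sum_mem
  intro m hm
  have hdeg : Finsupp.weight degW m = n := hp (mem_support_iff.mp hm)
  rw [monomial_eq, map_mul]
  have hC : Delta (C (MvPolynomial.coeff m p))
      = algebraMap ℝ (H ⊗[ℝ] H) (MvPolynomial.coeff m p) := by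
    rw [show (C (MvPolynomial.coeff m p) : H) = algebraMap ℝ H (MvPolynomial.coeff m p) from rfl]
    exact Delta.commutes _
  rw [hC, Algebra.algebraMap_eq_smul_one, smul_mul_assoc, one_mul]
  apply Submodule.smul_mem
  rw [Finsupp.prod, map_prod]
  have hpow : ∀ η ∈ m.support, Delta (X η ^ m η) = Delta (X η) ^ m η := fun η _ => map_pow _ _ _
  rw [Finset.prod_congr rfl hpow]
  have h2 := prod_mem_G m m.support
  have h3 : ∑ η ∈ m.support, m η * degW η = n := by
    rw [← hdeg, Finsupp.weight_apply, Finsupp.sum]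
    simp [smul_eq_mul]
  rwa [h3] at h2

/-! ### Connectedness -/

lemma degW_nonTorsion : NonTorsionWeight degW :=
  nonTorsionWeight_of fun η => by unfold degW; omega

lemma connected :
    weightedHomogeneousSubmodule ℝ degW 0 = Submodule.span ℝ {(1 : H)} := by
  apply le_antisymm
  · intro p hp
    rw [mem_weightedHomogeneousSubmodule] at hp
    have hconst : p = C (MvPolynomial.coeff 0 p) := by
      apply MvPolynomial.ext
      intro m
      by_cases hm : m = 0
      · subst hm; simp
      · have hz : MvPolynomial.coeff m p = 0 := by
          by_contra hnz
          have hw := hp hnz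
          rw [weightedDegree_eq_zero_iff degW_nonTorsion] at hw
          exact hm (Finsupp.ext fun x => hw x)
        rw [hz, coeff_C, if_neg (fun hh => hm hh.symm)]
    rw [hconst, show (C (MvPolynomial.coeff 0 p) : H) = MvPolynomial.coeff 0 p • 1 by
      rw [MvPolynomial.smul_eq_C_mul, mul_one]]
    exact Submodule.smul_mem _ _ (Submodule.mem_span_singleton_self 1)
  · rw [Submodule.span_le]
    intro x hx
    rw [Set.mem_singleton_iff] at hx
    subst hx
    exact isWeightedHomogeneous_one ℝ degW

end OFHAux

namespace OFHAux

open Paper MvPolynomial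

set_option maxHeartbeats 1000000
set_option synthInstance.maxHeartbeats 400000

/-! ### Antipode -/

def SFun (η : Word) : H :=
  -aw η - ∑ ξ ∈ ((allW η.length).filter fun ξ => degW ξ < degW η).attach,
      SFun ξ.1 * PH ξ.1 η
termination_by degW η
decreasing_by exact (Finset.mem_filter.mp ξ.2).2

def SAlg : H →ₐ[ℝ] H := MvPolynomial.aeval SFun

def invS (c : Series) : Series := fun η => evalS c (SFun η)

lemma evalS_SAlg (c : Series) (p : H) : evalS c (SAlg p) = evalS (invS c) p := by
  have h : (evalS c).comp SAlg = evalS (invS c) := by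
    apply MvPolynomial.algHom_ext
    intro η
    show evalS c (SAlg (X η)) = evalS (invS c) (X η)
    rw [show SAlg (X η) = SFun η from aeval_X _ _]
    simp [evalS, invS]
  exact AlgHom.congr_fun h p

lemma SFun_eq (η : Word) : SFun η =
    -aw η - ∑ ξ ∈ (allW η.length).filter (fun ξ => degW ξ < degW η),
      SFun ξ * PH ξ η := by
  conv_lhs => rw [SFun]
  congr 1
  exact Finset.sum_attach ((allW η.length).filter fun ξ => degW ξ < degW η)
    (fun ξ => SFun ξ * PH ξ η)

lemma gop_inv_left (c : Series) : gopR (invS c) c = 0 := by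
  funext η
  show c η + mcompR (invS c) c η = 0
  have hstep : mcompR (invS c) c η
      = ∑ ξ ∈ allW η.length, invS c ξ * evalS c (PH ξ η) :=
    Finset.sum_congr rfl fun ξ _ => by rw [evalS_PH]
  have hsplit : ∑ ξ ∈ allW η.length, invS c ξ * evalS c (PH ξ η)
      = (∑ ξ ∈ (allW η.length).filter (fun ξ => degW ξ < degW η),
          invS c ξ * evalS c (PH ξ η))
        + ∑ ξ ∈ (allW η.length).filter (fun ξ => ¬ degW ξ < degW η),
          invS c ξ * evalS c (PH ξ η) :=
    (Finset.sum_filter_add_sum_filter_not _ _ _).symm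
  have hdiag : ∑ ξ ∈ (allW η.length).filter (fun ξ => ¬ degW ξ < degW η),
      invS c ξ * evalS c (PH ξ η) = invS c η := by
    rw [Finset.sum_eq_single_of_mem η
      (Finset.mem_filter.mpr ⟨(mem_allW _ _).mpr le_rfl, by omega⟩)]
    · rw [PH_diag, map_one, mul_one]
    · intro ξ hξ hne
      have hge : ¬ degW ξ < degW η := (Finset.mem_filter.mp hξ).2
      rcases Nat.lt_or_ge (degW η) (degW ξ) with h | h
      · rw [PH_zero_of_lt h, map_zero, mul_zero]
      · rw [PH_offdiag (by omega) hne, map_zero, mul_zero]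
  have hlow : ∑ ξ ∈ (allW η.length).filter (fun ξ => degW ξ < degW η),
      invS c ξ * evalS c (PH ξ η)
      = evalS c (∑ ξ ∈ (allW η.length).filter (fun ξ => degW ξ < degW η),
          SFun ξ * PH ξ η) := by
    rw [map_sum]
    exact Finset.sum_congr rfl fun ξ _ => by rw [map_mul]; rfl
  rw [hstep, hsplit, hdiag, hlow]
  have hS := congrArg (evalS c) (SFun_eq η)
  rw [map_sub, map_neg] at hS
  have haw : evalS c (aw η) = c η := by simp [evalS, aw]
  rw [haw] at hS
  -- hS : evalS c (SFun η) = -c η - evalS c (∑ ...)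
  show c η + (evalS c (∑ ξ ∈ (allW η.length).filter (fun ξ => degW ξ < degW η),
      SFun ξ * PH ξ η) + invS c η) = 0
  show c η + (evalS c (∑ ξ ∈ (allW η.length).filter (fun ξ => degW ξ < degW η),
      SFun ξ * PH ξ η) + evalS c (SFun η)) = 0
  rw [hS]
  ring

lemma gop_inv_right (c : Series) : gopR c (invS c) = 0 := by
  have h1 := gop_inv_left c
  have h2 := gop_inv_left (invS c)
  have hc : c = invS (invS c) := by
    calc c = gopR 0 c := (gopR_zero_left c).symm
      _ = gopR (gopR (invS (invS c)) (invS c)) c := by rw [h2]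
      _ = gopR (invS (invS c)) (gopR (invS c) c) := gopR_assoc _ _ _
      _ = gopR (invS (invS c)) 0 := by rw [h1]
      _ = invS (invS c) := gopR_zero_right _
  nth_rewrite 1 [hc]
  exact h2

lemma mulS_eval_left (c : Series) (t : H ⊗[ℝ] H) :
    evalS c (LinearMap.mul' ℝ H (TensorProduct.map SAlg.toLinearMap LinearMap.id t))
      = pairHom (invS c) c t := by
  induction t with
  | zero => simp
  | tmul a b =>
    rw [TensorProduct.map_tmul]
    show evalS c (LinearMap.mul' ℝ H ((SAlg a) ⊗ₜ[ℝ] b)) = _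
    rw [LinearMap.mul'_apply, map_mul, evalS_SAlg, pairHom_tmul]
  | add x y hx hy => simp only [map_add, hx, hy]

lemma mulS_eval_right (c : Series) (t : H ⊗[ℝ] H) :
    evalS c (LinearMap.mul' ℝ H (TensorProduct.map LinearMap.id SAlg.toLinearMap t))
      = pairHom c (invS c) t := by
  induction t with
  | zero => simp
  | tmul a b =>
    rw [TensorProduct.map_tmul]
    show evalS c (LinearMap.mul' ℝ H (a ⊗ₜ[ℝ] (SAlg b))) = _
    rw [LinearMap.mul'_apply, map_mul, evalS_SAlg, pairHom_tmul]
  | add x y hx hy => simp only [map_add, hx, hy]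

lemma isAntipode_SAlg : IsAntipode Delta SAlg.toLinearMap := by
  constructor
  · intro p
    apply H_ext
    intro c
    rw [mulS_eval_left, pairHom_Delta, gop_inv_left, map_smul, map_one, smul_eq_mul, mul_one]
    rfl
  · intro p
    apply H_ext
    intro c
    rw [mulS_eval_right, pairHom_Delta, gop_inv_right, map_smul, map_one, smul_eq_mul, mul_one]
    rfl

end OFHAux

open Paper in
/-- The algebra `H` of coordinate functions with product `μ`, full
coproduct `Δ` (the algebra morphism determined by `Δ a_η = Δ̃ a_η + 1 ⊗ a_η`,
`Δ̃ a_η (c,d) = ⟨c ∘̃ d, η⟩`), counit `ε` and antipode `S` is a connected graded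
commutative non-cocommutative Hopf algebra, graded by
`deg(a_η) = 2|η|_{x0} + |η|_{x1} + 1` extended multiplicatively with `deg(1) = 0`. -/
theorem output_feedback_hopf_algebra :
    -- `H` is commutative
    (∀ p q : H, p * q = q * p) ∧
    -- the product is graded and `H` is connected
    (∀ (m n : ℕ) (p q : H), p.IsWeightedHomogeneous degW m → q.IsWeightedHomogeneous degW n →
        (p * q).IsWeightedHomogeneous degW (m + n)) ∧
    (MvPolynomial.weightedHomogeneousSubmodule ℝ degW 0 = Submodule.span ℝ {(1 : H)}) ∧
    -- the full coproduct `Δ` (an algebra morphism) exists, is coassociative and counital,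
    -- is graded, non-cocommutative, and admits an antipode `S`
    (∃ Δ : H →ₐ[ℝ] (H ⊗[ℝ] H), IsFBCoproduct Δ ∧
      (∀ p : H,
        TensorProduct.assoc ℝ H H H
            (TensorProduct.map Δ.toLinearMap LinearMap.id (Δ p)) =
          TensorProduct.map LinearMap.id Δ.toLinearMap (Δ p)) ∧
      (∀ p : H,
        TensorProduct.lid ℝ H
            (TensorProduct.map counit.toLinearMap LinearMap.id (Δ p)) = p) ∧
      (∀ p : H,
        TensorProduct.rid ℝ H
            (TensorProduct.map LinearMap.id counit.toLinearMap (Δ p)) = p) ∧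
      (∀ (n : ℕ) (p : H), p.IsWeightedHomogeneous degW n →
        Δ p ∈ ⨆ (pq : ℕ × ℕ) (_ : pq.1 + pq.2 = n),
          LinearMap.range (TensorProduct.map
            (MvPolynomial.weightedHomogeneousSubmodule ℝ degW pq.1).subtype
            (MvPolynomial.weightedHomogeneousSubmodule ℝ degW pq.2).subtype)) ∧
      (∃ p : H, TensorProduct.comm ℝ H H (Δ p) ≠ Δ p) ∧
      (∃ S : H →ₗ[ℝ] H, IsAntipode Δ S)) := by
  refine ⟨fun p q => mul_comm p q,
    fun m n p q hp hq => hp.mul hq,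
    OFHAux.connected,
    OFHAux.Delta, OFHAux.isFBCoproduct_Delta,
    OFHAux.Delta_coassoc,
    OFHAux.Delta_counit_l,
    OFHAux.Delta_counit_r,
    fun n p hp => OFHAux.Delta_mem hp,
    OFHAux.Delta_noncocomm,
    OFHAux.SAlg.toLinearMap, OFHAux.isAntipode_SAlg⟩
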